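/- arXiv:2306.17332 — 6 statements merged into one kernel-verified Lean document; each statement's English description precedes it below -/
import Mathlib

section
/- Let σ : ℝ → ℝ be non-decreasing and L-Lipschitz, let A be an n × k real matrix and b ∈ ℝⁿ. Define f(x) = −Aᵀ σ(Ax + b) where σ acts componentwise. Then for all x, y ∈ ℝᵏ: ⟨f(x) − f(y), x − y⟩ ≤ −(1/(‖A‖² L)) ‖f(x) − f(y)‖², where ‖A‖ is the operator norm (assume A ≠ 0 and L > 0). -/
open scoped RealInnerProductSpace Matrix

set_option maxHeartbeats 2000000 in
theorem stmt3 (n k : ℕ) (σ : ℝ → ℝ) (L : ℝ) (hL : 0 < L)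
    (hmono : Monotone σ) (hlip : ∀ a b, |σ a - σ b| ≤ L * |a - b|)
    (A : Matrix (Fin n) (Fin k) ℝ) (hA : A ≠ 0) (b : EuclideanSpace ℝ (Fin n))
    (f : EuclideanSpace ℝ (Fin k) → EuclideanSpace ℝ (Fin k))
    (hf : ∀ x, f x = -(Matrix.toEuclideanLin Aᵀ)
      (WithLp.toLp 2 (fun i => σ ((Matrix.toEuclideanLin A x + b) i)))) :
    ∀ x y, ⟪f x - f y, x - y⟫ ≤
      -(1 / (‖LinearMap.toContinuousLinearMap (Matrix.toEuclideanLin A)‖ ^ 2 * L)) *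
        ‖f x - f y‖ ^ 2 := by
  intro x y
  set T := Matrix.toEuclideanLin A with hT
  set C := ‖LinearMap.toContinuousLinearMap T‖ with hC
  -- positivity of the operator norm
  have hC0 : 0 < C := by
    rw [hC, norm_pos_iff]
    intro h
    apply hA
    have hT0 : T = 0 := by
      have := congrArg (LinearMap.toContinuousLinearMap :
        (EuclideanSpace ℝ (Fin k) →ₗ[ℝ] EuclideanSpace ℝ (Fin n)) ≃ₗ[ℝ] _).symm h
      simpa using this
    have := congrArg (Matrix.toEuclideanLin (𝕜 := ℝ) (m := Fin n) (n := Fin k)).symm hT0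
    simpa [hT] using this
  -- the key pointwise estimate
  have key : ∀ p q : ℝ, (σ p - σ q) ^ 2 ≤ L * ((σ p - σ q) * (p - q)) := by
    intro p q
    have hsd : 0 ≤ (σ p - σ q) * (p - q) := by
      rcases le_total p q with h | h
      · nlinarith [hmono h]
      · nlinarith [hmono h]
    calc (σ p - σ q) ^ 2 = |σ p - σ q| * |σ p - σ q| := by
            rw [← sq_abs]; ring
      _ ≤ (L * |p - q|) * |σ p - σ q| :=
            mul_le_mul_of_nonneg_right (hlip p q) (abs_nonneg _)
      _ = L * |(σ p - σ q) * (p - q)| := by rw [abs_mul]; ring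
      _ = L * ((σ p - σ q) * (p - q)) := by rw [abs_of_nonneg hsd]
  -- the vectors of activations
  set u : EuclideanSpace ℝ (Fin n) := WithLp.toLp 2 (fun i => σ ((T x + b) i)) with hu
  set v : EuclideanSpace ℝ (Fin n) := WithLp.toLp 2 (fun i => σ ((T y + b) i)) with hv
  set w : EuclideanSpace ℝ (Fin n) := u - v with hw
  have hadj : Matrix.toEuclideanLin Aᵀ = LinearMap.adjoint T := by
    rw [hT, ← Matrix.toEuclideanLin_conjTranspose_eq_adjoint,
      Matrix.conjTranspose_eq_transpose_of_trivial]
  have hfd : f x - f y = -(LinearMap.adjoint T w) := by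
    rw [hf x, hf y, hadj, hw, map_sub]
    abel
  -- inner product identity
  have hinner : ⟪f x - f y, x - y⟫ = -⟪w, T (x - y)⟫ := by
    rw [hfd, inner_neg_left, LinearMap.adjoint_inner_left]
  -- the pointwise bound summed
  have hwz : ∀ i, w i = σ ((T x + b) i) - σ ((T y + b) i) := fun i => rfl
  have hTi : ∀ i, T (x - y) i = (T x + b) i - (T y + b) i := by
    intro i
    have : T (x - y) = T x - T y := map_sub T x y
    rw [this]
    simp [PiLp.sub_apply, PiLp.add_apply]
  have hsum : ‖w‖ ^ 2 ≤ L * ⟪w, T (x - y)⟫ := by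
    have h1 : ⟪w, T (x - y)⟫ = ∑ i, w i * T (x - y) i := by
      simp [PiLp.inner_apply, RCLike.inner_apply, conj_trivial]
      exact Finset.sum_congr rfl (fun i _ => mul_comm _ _)
    have h2 : ‖w‖ ^ 2 = ∑ i, (w i) ^ 2 := by
      rw [← real_inner_self_eq_norm_sq]
      simp [PiLp.inner_apply, RCLike.inner_apply, conj_trivial, sq]
      rw [← sq, EuclideanSpace.norm_eq, Real.sq_sqrt (by positivity)]
      simp [sq, Real.norm_eq_abs]
    rw [h1, h2, Finset.mul_sum]
    apply Finset.sum_le_sum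
    intro i _
    rw [hwz i, hTi i]
    exact key _ _
  -- norm bound : ‖f x - f y‖ ≤ C * ‖w‖
  have hwnn : (0:ℝ) ≤ ‖w‖ := norm_nonneg _
  have hnorm : ‖f x - f y‖ ≤ C * ‖w‖ := by
    rw [hfd, norm_neg]
    have h2 : ‖LinearMap.toContinuousLinearMap (LinearMap.adjoint T)‖ = C := by
      rw [LinearMap.adjoint_toContinuousLinearMap, hC]
      exact LinearIsometryEquiv.norm_map ContinuousLinearMap.adjoint _
    calc ‖(LinearMap.adjoint T) w‖
        = ‖LinearMap.toContinuousLinearMap (LinearMap.adjoint T) w‖ := by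
          rw [LinearMap.coe_toContinuousLinearMap']
      _ ≤ ‖LinearMap.toContinuousLinearMap (LinearMap.adjoint T)‖ * ‖w‖ :=
          ContinuousLinearMap.le_opNorm _ _
      _ = C * ‖w‖ := by rw [h2]
  have hnorm2 : ‖f x - f y‖ ^ 2 ≤ C ^ 2 * ‖w‖ ^ 2 := by
    nlinarith [mul_self_le_mul_self (norm_nonneg (f x - f y)) hnorm]
  -- combine
  have hCL : 0 < C ^ 2 * L := by positivity
  rw [hinner]
  have h3 : (1 / L) * ‖w‖ ^ 2 ≤ ⟪w, T (x - y)⟫ := by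
    rw [div_mul_eq_mul_div, one_mul, div_le_iff₀ hL]
    linarith [hsum]
  have h4 : (1 / (C ^ 2 * L)) * ‖f x - f y‖ ^ 2 ≤ (1 / L) * ‖w‖ ^ 2 := by
    rw [div_mul_eq_mul_div, one_mul, div_mul_eq_mul_div, one_mul,
      div_le_div_iff₀ hCL hL]
    nlinarith [hnorm2, hL]
  linarith [le_trans h4 h3]
end

section
/- (Baillon–Haddad, one direction) Let φ : H → ℝ be a Fréchet-differentiable convex function on a real Hilbert space H whose gradient is L-Lipschitz, with L > 0. Then ∇φ is (1/L)-co-coercive: ⟨∇φ(y) − ∇φ(x), y − x⟩ ≥ (1/L)‖∇φ(y) − ∇φ(x)‖² for all x, y ∈ H. -/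
open scoped RealInnerProductSpace
open Topology

section Aux

variable {H : Type*} [NormedAddCommGroup H] [InnerProductSpace ℝ H] [CompleteSpace H]

/-- derivative of φ along a line -/
lemma aux_line_deriv (φ : H → ℝ) (g : H → H) (hgrad : ∀ x, HasGradientAt φ (g x) x)
    (x v : H) (t : ℝ) :
    HasDerivAt (fun s : ℝ => φ (x + s • v)) ⟪g (x + t • v), v⟫ t := by
  have hc : HasDerivAt (fun s : ℝ => x + s • v) v t := by
    simpa using ((hasDerivAt_id t).smul_const v).const_add x
  have := ((hgrad (x + t • v)).hasFDerivAt).comp_hasDerivAt t hc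
  simpa [InnerProductSpace.toDual_apply_apply, Function.comp_def] using this

/-- subgradient inequality for convex differentiable functions -/
lemma aux_subgrad (φ : H → ℝ) (g : H → H)
    (hconv : ConvexOn ℝ Set.univ φ) (hgrad : ∀ x, HasGradientAt φ (g x) x)
    (x y : H) : φ x + ⟪g x, y - x⟫ ≤ φ y := by
  set v := y - x with hv
  have hψ : HasDerivAt (fun s : ℝ => φ (x + s • v)) ⟪g x, v⟫ 0 := by
    simpa using aux_line_deriv φ g hgrad x v 0
  have hslope : Filter.Tendsto (slope (fun s : ℝ => φ (x + s • v)) 0) (𝓝[>] 0)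
      (𝓝 ⟪g x, v⟫) := by
    have := hasDerivAt_iff_tendsto_slope.mp hψ
    exact this.mono_left (nhdsWithin_mono 0 fun t ht => ne_of_gt ht)
  have hle : ⟪g x, v⟫ ≤ φ y - φ x := by
    refine le_of_tendsto hslope ?_
    filter_upwards [Ioo_mem_nhdsGT_of_mem (Set.left_mem_Ico.2 one_pos)] with t ht
    have ht0 : 0 < t := ht.1
    have ht1 : t < 1 := ht.2
    have hcomb : φ (x + t • v) ≤ (1 - t) * φ x + t * φ y := by
      have := hconv.2 (Set.mem_univ x) (Set.mem_univ y) (by linarith : (0:ℝ) ≤ 1 - t)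
        (le_of_lt ht0) (by ring)
      have hxy : (1 - t) • x + t • y = x + t • v := by
        simp [hv, smul_sub, sub_smul]; abel
      simpa [hxy, smul_eq_mul] using this
    have : slope (fun s : ℝ => φ (x + s • v)) 0 t
        = (φ (x + t • v) - φ x) / t := by
      simp [slope_def_field, div_eq_inv_mul]
    rw [this]
    rw [div_le_iff₀ ht0]
    nlinarith
  linarith

/-- descent lemma -/
lemma aux_descent (φ : H → ℝ) (g : H → H) (L : ℝ) (hL : 0 < L)
    (hgrad : ∀ x, HasGradientAt φ (g x) x)
    (hlip : ∀ x y, ‖g x - g y‖ ≤ L * ‖x - y‖)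
    (x y : H) : φ y ≤ φ x + ⟪g x, y - x⟫ + L / 2 * ‖y - x‖ ^ 2 := by
  set v := y - x with hv
  have hgcont : Continuous g := by
    have : LipschitzWith (Real.toNNReal L) g := by
      refine LipschitzWith.of_dist_le_mul fun a b => ?_
      rw [dist_eq_norm, dist_eq_norm]
      calc ‖g a - g b‖ ≤ L * ‖a - b‖ := hlip a b
        _ ≤ _ := by rw [Real.coe_toNNReal L hL.le]
    exact this.continuous
  have hψ' : ∀ t : ℝ, HasDerivAt (fun s : ℝ => φ (x + s • v)) ⟪g (x + t • v), v⟫ t :=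
    fun t => aux_line_deriv φ g hgrad x v t
  have hcont : Continuous fun t : ℝ => ⟪g (x + t • v), v⟫ := by
    apply Continuous.inner
    · exact hgcont.comp (by continuity)
    · exact continuous_const
  have hint : φ (x + (1:ℝ) • v) - φ (x + (0:ℝ) • v)
      = ∫ t in (0:ℝ)..1, ⟪g (x + t • v), v⟫ := by
    rw [intervalIntegral.integral_eq_sub_of_hasDerivAt (fun t _ => hψ' t)
      (hcont.intervalIntegrable 0 1)]
  have hbound : ∀ t ∈ Set.Icc (0:ℝ) 1,
      ⟪g (x + t • v), v⟫ ≤ ⟪g x, v⟫ + L * ‖v‖ ^ 2 * t := by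
    intro t ht
    have h1 : ⟪g (x + t • v) - g x, v⟫ ≤ ‖g (x + t • v) - g x‖ * ‖v‖ :=
      real_inner_le_norm _ _
    have h2 : ‖g (x + t • v) - g x‖ ≤ L * (t * ‖v‖) := by
      have := hlip (x + t • v) x
      simpa [norm_smul, abs_of_nonneg ht.1, mul_assoc] using this
    have h3 : ‖g (x + t • v) - g x‖ * ‖v‖ ≤ L * (t * ‖v‖) * ‖v‖ :=
      mul_le_mul_of_nonneg_right h2 (norm_nonneg v)
    have h4 : ⟪g (x + t • v), v⟫ - ⟪g x, v⟫ ≤ L * (t * ‖v‖) * ‖v‖ := by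
      rw [← inner_sub_left]; exact h1.trans h3
    nlinarith [sq_nonneg ‖v‖]
  have hintle : (∫ t in (0:ℝ)..1, ⟪g (x + t • v), v⟫)
      ≤ ∫ t in (0:ℝ)..1, (⟪g x, v⟫ + L * ‖v‖ ^ 2 * t) := by
    apply intervalIntegral.integral_mono_on zero_le_one
      (hcont.intervalIntegrable 0 1)
      ((by continuity : Continuous fun t : ℝ => ⟪g x, v⟫ + L * ‖v‖ ^ 2 * t).intervalIntegrable 0 1)
    exact hbound
  have hval : (∫ t in (0:ℝ)..1, (⟪g x, v⟫ + L * ‖v‖ ^ 2 * t))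
      = ⟪g x, v⟫ + L / 2 * ‖v‖ ^ 2 := by
    have hc3 : Continuous fun t : ℝ => L * ‖v‖ ^ 2 * t := by continuity
    rw [intervalIntegral.integral_add (intervalIntegrable_const) (hc3.intervalIntegrable 0 1),
      intervalIntegral.integral_const_mul, integral_id,
      intervalIntegral.integral_const]
    norm_num
    ring
  have : φ y - φ x ≤ ⟪g x, v⟫ + L / 2 * ‖v‖ ^ 2 := by
    have h0 : x + (0:ℝ) • v = x := by simp
    have h1 : x + (1:ℝ) • v = y := by simp [hv]
    rw [h0, h1] at hint
    rw [hint]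
    exact hintle.trans (le_of_eq hval)
  linarith

/-- key strengthened lower bound -/
lemma aux_key (φ : H → ℝ) (g : H → H) (L : ℝ) (hL : 0 < L)
    (hconv : ConvexOn ℝ Set.univ φ) (hgrad : ∀ x, HasGradientAt φ (g x) x)
    (hlip : ∀ x y, ‖g x - g y‖ ≤ L * ‖x - y‖)
    (x z : H) :
    φ x + ⟪g x, z - x⟫ + 1 / (2 * L) * ‖g z - g x‖ ^ 2 ≤ φ z := by
  set u := g z - g x with hu
  set w := z - (L⁻¹) • u with hw
  have h1 : φ x + ⟪g x, w - x⟫ ≤ φ w := aux_subgrad φ g hconv hgrad x w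
  have h2 : φ w ≤ φ z + ⟪g z, w - z⟫ + L / 2 * ‖w - z‖ ^ 2 :=
    aux_descent φ g L hL hgrad hlip z w
  have hwz : w - z = -(L⁻¹ • u) := by rw [hw]; abel
  have hnorm : ‖w - z‖ ^ 2 = L⁻¹ ^ 2 * ‖u‖ ^ 2 := by
    rw [hwz, norm_neg, norm_smul, mul_pow]
    congr 1
    rw [Real.norm_eq_abs, sq_abs]
  have hiz : ⟪g z, w - z⟫ = -(L⁻¹ * ⟪g z, u⟫) := by
    rw [hwz, inner_neg_right, real_inner_smul_right]
  have hix : ⟪g x, w - x⟫ = ⟪g x, z - x⟫ - L⁻¹ * ⟪g x, u⟫ := by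
    have : w - x = (z - x) - L⁻¹ • u := by rw [hw]; abel
    rw [this, inner_sub_right, real_inner_smul_right]
  have huu : ⟪g z, u⟫ - ⟪g x, u⟫ = ‖u‖ ^ 2 := by
    rw [← inner_sub_left, ← hu, real_inner_self_eq_norm_sq]
  rw [hix] at h1
  rw [hiz, hnorm] at h2
  have hL' : L ≠ 0 := ne_of_gt hL
  have key : φ x + ⟪g x, z - x⟫ ≤ φ z - L⁻¹ * ‖u‖ ^ 2 + L / 2 * (L⁻¹ ^ 2 * ‖u‖ ^ 2) := by
    have huu' : L⁻¹ * ⟪g z, u⟫ - L⁻¹ * ⟪g x, u⟫ = L⁻¹ * ‖u‖ ^ 2 := by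
      rw [← mul_sub, huu]
    linarith [h1, h2, huu']
  have heq : L⁻¹ * ‖u‖ ^ 2 - L / 2 * (L⁻¹ ^ 2 * ‖u‖ ^ 2) = 1 / (2 * L) * ‖u‖ ^ 2 := by
    field_simp
    ring
  linarith [key, heq.ge, heq.le]

end Aux

theorem stmt6 {H : Type*} [NormedAddCommGroup H] [InnerProductSpace ℝ H] [CompleteSpace H]
    (φ : H → ℝ) (g : H → H) (L : ℝ) (hL : 0 < L)
    (hconv : ConvexOn ℝ Set.univ φ)
    (hgrad : ∀ x, HasGradientAt φ (g x) x)
    (hlip : ∀ x y, ‖g x - g y‖ ≤ L * ‖x - y‖) :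
    ∀ x y : H, ⟪g y - g x, y - x⟫ ≥ (1 / L) * ‖g y - g x‖ ^ 2 := by
  intro x y
  have h1 := aux_key φ g L hL hconv hgrad hlip x y
  have h2 := aux_key φ g L hL hconv hgrad hlip y x
  have hn : ‖g x - g y‖ = ‖g y - g x‖ := norm_sub_rev _ _
  rw [hn] at h2
  have hxy : ⟪g y, x - y⟫ = -⟪g y, y - x⟫ := by
    rw [← inner_neg_right]; congr 1; abel
  rw [hxy] at h2
  have hsum : ⟪g y, y - x⟫ - ⟪g x, y - x⟫ ≥ 2 * (1 / (2 * L)) * ‖g y - g x‖ ^ 2 := by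
    linarith
  have hinner : ⟪g y - g x, y - x⟫ = ⟪g y, y - x⟫ - ⟪g x, y - x⟫ := inner_sub_left _ _ _
  have hLeq : 2 * (1 / (2 * L)) = 1 / L := by field_simp
  rw [hinner]
  rw [hLeq] at hsum
  exact hsum
end

section
/- Let Ξ : ℝⁿ → ℝⁿ be C¹ with symmetric Jacobian DΞ(x) everywhere, and let α ∈ (0,1). If spec(DΞ(x)) ⊆ [1−2α, 1] for all x, then Ξ is α-averaged. -/
open scoped RealInnerProductSpace

lemma key_norm_bound (n : ℕ) (A : EuclideanSpace ℝ (Fin n) →L[ℝ] EuclideanSpace ℝ (Fin n))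
    (hA : ∀ u v, ⟪A u, v⟫ = ⟪u, A v⟫)
    (α : ℝ) (hα : α ∈ Set.Ioo (0 : ℝ) 1)
    (hspec : spectrum ℝ A ⊆ Set.Icc (1 - 2 * α) 1) (u : EuclideanSpace ℝ (Fin n)) :
    ‖α⁻¹ • (A u - (1 - α) • u)‖ ≤ ‖u‖ := by
  have hαpos : 0 < α := hα.1
  have hsymm : (A : EuclideanSpace ℝ (Fin n) →ₗ[ℝ] EuclideanSpace ℝ (Fin n)).IsSymmetric := by
    intro x y; exact hA x y
  have hn : Module.finrank ℝ (EuclideanSpace ℝ (Fin n)) = n := finrank_euclideanSpace_fin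
  set b := hsymm.eigenvectorBasis hn with hb
  set μ := hsymm.eigenvalues hn with hμ
  -- eigenvalues lie in the spectrum
  have hμ_mem : ∀ i, μ i ∈ Set.Icc (1 - 2 * α) 1 := by
    intro i
    apply hspec
    have hev := hsymm.hasEigenvector_eigenvectorBasis hn i
    rw [spectrum.mem_iff]
    intro hunit
    obtain ⟨v0, hv0⟩ := hunit.exists_left_inv
    have happ : (algebraMap ℝ (EuclideanSpace ℝ (Fin n) →L[ℝ] EuclideanSpace ℝ (Fin n)) (μ i) - A)
        (b i) = 0 := by
      have := Module.End.mem_eigenspace_iff.mp hev.1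
      simp only [ContinuousLinearMap.sub_apply, Algebra.algebraMap_eq_smul_one,
        ContinuousLinearMap.smul_apply, ContinuousLinearMap.one_apply]
      rw [show A (b i) = μ i • b i from this]
      simp
    have : b i = 0 := by
      have := congrArg (fun (f : EuclideanSpace ℝ (Fin n) →L[ℝ] EuclideanSpace ℝ (Fin n)) => f (b i)) hv0
      simpa [ContinuousLinearMap.mul_apply, happ] using this.symm
    exact hev.2 this
  -- coefficient bound
  have hcoef : ∀ i, |α⁻¹ * (μ i - (1 - α))| ≤ 1 := by
    intro i
    have h1 := (hμ_mem i).1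
    have h2 := (hμ_mem i).2
    have hinv : α * α⁻¹ = 1 := mul_inv_cancel₀ (ne_of_gt hαpos)
    have hinvpos : 0 < α⁻¹ := inv_pos.mpr hαpos
    rw [abs_le]
    constructor <;> nlinarith
  -- compute coordinates
  set v := α⁻¹ • (A u - (1 - α) • u) with hv
  have hrepr : ∀ i, b.repr v i = (α⁻¹ * (μ i - (1 - α))) * b.repr u i := by
    intro i
    have hAu : b.repr (A u) i = μ i * b.repr u i :=
      hsymm.eigenvectorBasis_apply_self_apply hn u i
    simp only [hv, map_smul, map_sub]
    simp only [PiLp.smul_apply, PiLp.sub_apply, smul_eq_mul, hAu]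
    ring
  -- norm comparison
  rw [← b.repr.norm_map v, ← b.repr.norm_map u]
  rw [EuclideanSpace.norm_eq, EuclideanSpace.norm_eq]
  apply Real.sqrt_le_sqrt
  apply Finset.sum_le_sum
  intro i _
  have := hrepr i
  simp only [Real.norm_eq_abs]
  rw [this, abs_mul]
  have h1 : |(α⁻¹ * (μ i - (1 - α)))| * |b.repr u i| ≤ 1 * |b.repr u i| :=
    mul_le_mul_of_nonneg_right (hcoef i) (abs_nonneg _)
  rw [one_mul] at h1
  exact pow_le_pow_left₀ (by positivity) h1 2

theorem stmt10 (n : ℕ) (Ξ : EuclideanSpace ℝ (Fin n) → EuclideanSpace ℝ (Fin n))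
    (hC1 : ContDiff ℝ 1 Ξ)
    (hsym : ∀ x u v, inner ℝ (fderiv ℝ Ξ x u) v = (inner ℝ u (fderiv ℝ Ξ x v) : ℝ))
    (α : ℝ) (hα : α ∈ Set.Ioo (0 : ℝ) 1)
    (hspec : ∀ x, spectrum ℝ (fderiv ℝ Ξ x) ⊆ Set.Icc (1 - 2 * α) 1) :
    ∃ T : EuclideanSpace ℝ (Fin n) → EuclideanSpace ℝ (Fin n),
      LipschitzWith 1 T ∧ ∀ x, Ξ x = (1 - α) • x + α • T x := by
  have hαpos : 0 < α := hα.1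
  have hαne : α ≠ 0 := ne_of_gt hαpos
  refine ⟨fun x => α⁻¹ • (Ξ x - (1 - α) • x), ?_, ?_⟩
  · -- Lipschitz
    set T := fun x => α⁻¹ • (Ξ x - (1 - α) • x) with hT
    have hdiff : Differentiable ℝ Ξ := hC1.differentiable one_ne_zero
    have hTd : ∀ x, HasFDerivAt T
        (α⁻¹ • (fderiv ℝ Ξ x - (1 - α) • ContinuousLinearMap.id ℝ (EuclideanSpace ℝ (Fin n)))) x := by
      intro x
      have h1 : HasFDerivAt Ξ (fderiv ℝ Ξ x) x := (hdiff x).hasFDerivAt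
      have h2 : HasFDerivAt (fun y : EuclideanSpace ℝ (Fin n) => (1 - α) • y)
          ((1 - α) • ContinuousLinearMap.id ℝ (EuclideanSpace ℝ (Fin n))) x :=
        (hasFDerivAt_id x).const_smul (1 - α)
      exact (h1.sub h2).const_smul α⁻¹
    apply lipschitzWith_of_nnnorm_fderiv_le (fun x => ((hTd x).differentiableAt))
    intro x
    rw [(hTd x).fderiv]
    apply ContinuousLinearMap.opNNNorm_le_bound
    intro u
    rw [one_mul, ← NNReal.coe_le_coe, coe_nnnorm, coe_nnnorm]
    have := key_norm_bound n (fderiv ℝ Ξ x) (hsym x) α hα (hspec x) u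
    simpa using this
  · intro x
    rw [smul_smul, mul_inv_cancel₀ hαne, one_smul]
    abel
end

section
/- Let Ξ : ℝⁿ → ℝⁿ be C¹ with everywhere symmetric Jacobian and let α ∈ (0,1). If Ξ is α-averaged, then spec(DΞ(x)) ⊆ [1−2α, 1] for all x ∈ ℝⁿ. -/
theorem stmt11 (n : ℕ) (Ξ : EuclideanSpace ℝ (Fin n) → EuclideanSpace ℝ (Fin n))
    (hC1 : ContDiff ℝ 1 Ξ)
    (hsym : ∀ x u v, inner ℝ (fderiv ℝ Ξ x u) v = (inner ℝ u (fderiv ℝ Ξ x v) : ℝ))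
    (α : ℝ) (hα : α ∈ Set.Ioo (0 : ℝ) 1)
    (hav : ∃ T : EuclideanSpace ℝ (Fin n) → EuclideanSpace ℝ (Fin n),
      LipschitzWith 1 T ∧ ∀ x, Ξ x = (1 - α) • x + α • T x) :
    ∀ x, spectrum ℝ (fderiv ℝ Ξ x) ⊆ Set.Icc (1 - 2 * α) 1 := by
  obtain ⟨hα0, hα1⟩ := hα
  obtain ⟨T, hTlip, hT⟩ := hav
  intro x μ hμ
  rcases Nat.eq_zero_or_pos n with hn | hn
  · subst hn
    haveI : Subsingleton (EuclideanSpace ℝ (Fin 0)) :=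
      ⟨fun a b => by ext i; exact absurd i.2 (by simp)⟩
    haveI : Subsingleton (EuclideanSpace ℝ (Fin 0) →L[ℝ] EuclideanSpace ℝ (Fin 0)) :=
      ⟨fun a b => by ext v i; exact i.elim0⟩
    exact absurd (isUnit_of_subsingleton _) (spectrum.mem_iff.mp hμ)
  haveI : NeZero n := ⟨hn.ne'⟩
  set A := fderiv ℝ Ξ x with hA
  have hαne : α ≠ 0 := ne_of_gt hα0
  have hTfun : T = fun y => α⁻¹ • (Ξ y - (1 - α) • y) := by
    funext y
    rw [hT y, add_sub_cancel_left, smul_smul, inv_mul_cancel₀ hαne, one_smul]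
  have hΞd : HasFDerivAt Ξ A x := (hC1.differentiable one_ne_zero x).hasFDerivAt
  set B : EuclideanSpace ℝ (Fin n) →L[ℝ] EuclideanSpace ℝ (Fin n) :=
    α⁻¹ • (A - (1 - α) • ContinuousLinearMap.id ℝ (EuclideanSpace ℝ (Fin n))) with hBdef
  have hTd : HasFDerivAt T B x := by
    rw [hTfun]
    exact ((hΞd.sub ((hasFDerivAt_id x).const_smul (1 - α))).const_smul α⁻¹)
  have hBnorm : ‖B‖ ≤ 1 := by
    have := hTd.le_of_lipschitz hTlip
    simpa using this
  have hAeq : A = (1 - α) • (1 : EuclideanSpace ℝ (Fin n) →L[ℝ] EuclideanSpace ℝ (Fin n))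
      + α • B := by
    rw [hBdef, smul_smul, mul_inv_cancel₀ hαne, one_smul]
    simp [ContinuousLinearMap.one_def]
  set lam := (μ - (1 - α)) / α with hlam
  have hc : α * lam = μ - (1 - α) := by rw [hlam]; field_simp
  have h1 : α • B = A - (1 - α) • (1 : EuclideanSpace ℝ (Fin n) →L[ℝ] EuclideanSpace ℝ (Fin n)) := by
    rw [hAeq]; abel
  have key : algebraMap ℝ _ μ - A = α • (algebraMap ℝ _ lam - B) := by
    rw [Algebra.algebraMap_eq_smul_one, Algebra.algebraMap_eq_smul_one, smul_sub, smul_smul,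
      hc, h1]
    module
  have hmem : lam ∈ spectrum ℝ B := by
    rw [spectrum.mem_iff]
    intro hu
    apply spectrum.mem_iff.mp hμ
    rw [key, show α • (algebraMap ℝ (EuclideanSpace ℝ (Fin n) →L[ℝ] EuclideanSpace ℝ (Fin n)) lam - B)
        = algebraMap ℝ _ α * (algebraMap ℝ _ lam - B) by ext v; simp [Algebra.algebraMap_eq_smul_one]]
    exact ((isUnit_iff_ne_zero.mpr hαne).map (algebraMap ℝ (EuclideanSpace ℝ (Fin n) →L[ℝ] EuclideanSpace ℝ (Fin n)))).mul hu
  have hlamle : ‖lam‖ ≤ ‖B‖ := spectrum.norm_le_norm_of_mem hmem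
  have habs : |lam| ≤ 1 := by
    rw [Real.norm_eq_abs] at hlamle
    exact hlamle.trans hBnorm
  have hμeq : μ = (1 - α) + α * lam := by rw [hc]; ring
  rw [abs_le] at habs
  constructor <;> nlinarith [habs.1, habs.2]
end

section
/- Let σ : ℝ → ℝ be non-decreasing and L-Lipschitz, A an n × k matrix, b ∈ ℝⁿ, h > 0, and α ∈ (0,1). If h‖A‖² ≤ 2α/L, then the layer Ξ(x) = x − h Aᵀσ(Ax + b) is an α-averaged operator on ℝᵏ. -/
open scoped Matrix RealInnerProductSpace

set_option maxHeartbeats 1000000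

private lemma stmt13_aux (σ : ℝ → ℝ) (L : ℝ) (hmono : Monotone σ)
    (hlip : ∀ a b, |σ a - σ b| ≤ L * |a - b|) (p q : ℝ) :
    (σ p - σ q) ^ 2 ≤ L * ((p - q) * (σ p - σ q)) := by
  rcases le_total q p with hpq | hpq
  · have hm : σ q ≤ σ p := hmono hpq
    have hl : σ p - σ q ≤ L * (p - q) := by
      have := hlip p q
      rwa [abs_of_nonneg (by linarith), abs_of_nonneg (by linarith)] at this
    nlinarith
  · have hm : σ p ≤ σ q := hmono hpq
    have hl : σ q - σ p ≤ L * (q - p) := by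
      have := hlip q p
      rwa [abs_of_nonneg (by linarith), abs_of_nonneg (by linarith)] at this
    nlinarith

private lemma stmt13_aux2 (L c M I nd nB nx : ℝ) (hL : 0 < L) (hc : 0 < c)
    (h3 : L * c * M ^ 2 ≤ 2) (hLI : nd ^ 2 ≤ L * I) (hBn : nB ≤ M * nd)
    (hnd : 0 ≤ nd) (hnB : 0 ≤ nB) :
    nx ^ 2 - 2 * (c * I) + c ^ 2 * nB ^ 2 ≤ nx ^ 2 := by
  have hN2 : nB ^ 2 ≤ M ^ 2 * nd ^ 2 := by nlinarith
  have e2 : c * nd ^ 2 ≤ c * (L * I) := by nlinarith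
  have e4 : c ^ 2 * (M ^ 2 * nd ^ 2) ≤ 2 * c * I := by
    have h5 : (L * c * M ^ 2) * (c * nd ^ 2) ≤ 2 * (c * nd ^ 2) := by
      have : 0 ≤ c * nd ^ 2 := by positivity
      nlinarith
    have h6 : L * (c ^ 2 * (M ^ 2 * nd ^ 2)) ≤ L * (2 * c * I) := by nlinarith
    exact le_of_mul_le_mul_left h6 hL
  nlinarith [sq_nonneg c]

theorem stmt13 (n k : ℕ) (σ : ℝ → ℝ) (L : ℝ) (hL : 0 < L)
    (hmono : Monotone σ) (hlip : ∀ a b, |σ a - σ b| ≤ L * |a - b|)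
    (A : Matrix (Fin n) (Fin k) ℝ) (b : EuclideanSpace ℝ (Fin n))
    (h : ℝ) (hh : 0 < h) (α : ℝ) (hα : α ∈ Set.Ioo (0 : ℝ) 1)
    (hbound : h * ‖LinearMap.toContinuousLinearMap (Matrix.toEuclideanLin A)‖ ^ 2 ≤ 2 * α / L) :
    ∃ T : EuclideanSpace ℝ (Fin k) → EuclideanSpace ℝ (Fin k),
      LipschitzWith 1 T ∧
      ∀ x, x - h • (Matrix.toEuclideanLin Aᵀ)
          (WithLp.toLp 2 (fun i => σ ((Matrix.toEuclideanLin A x + b) i))) =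
        (1 - α) • x + α • T x := by
  obtain ⟨hα0, hα1⟩ := hα
  set Ab := Matrix.toEuclideanLin A with hAb
  set M := ‖LinearMap.toContinuousLinearMap Ab‖ with hM
  set c : ℝ := h / α with hcdef
  have hcα : c * α = h := div_mul_cancel₀ h hα0.ne'
  have hcpos : 0 < c := div_pos hh hα0
  set B := Matrix.toEuclideanLin Aᵀ with hB
  set g : EuclideanSpace ℝ (Fin n) → EuclideanSpace ℝ (Fin n) :=
    fun v => WithLp.toLp 2 (fun i => σ (v i)) with hg
  have hadj : B = LinearMap.adjoint Ab := by
    rw [hB, hAb, ← Matrix.toEuclideanLin_conjTranspose_eq_adjoint]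
    congr 1
  have hb2 : h * M ^ 2 * L ≤ 2 * α := by rwa [le_div_iff₀ hL] at hbound
  have h3 : L * c * M ^ 2 ≤ 2 := by
    have : α * (L * c * M ^ 2) ≤ α * 2 := by nlinarith
    exact le_of_mul_le_mul_left this hα0
  refine ⟨fun x => x - c • B (g (Ab x + b)), ?_, ?_⟩
  · rw [lipschitzWith_iff_dist_le_mul]
    intro x y
    simp only [NNReal.coe_one, one_mul, dist_eq_norm]
    set d : EuclideanSpace ℝ (Fin n) := g (Ab x + b) - g (Ab y + b) with hd
    set u : EuclideanSpace ℝ (Fin n) := Ab (x - y) with hu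
    have hTsub : (x - c • B (g (Ab x + b))) - (y - c • B (g (Ab y + b)))
        = (x - y) - c • B d := by
      rw [hd, map_sub B, smul_sub]; abel
    rw [hTsub]
    -- key quantities
    set I : ℝ := ⟪u, d⟫ with hI
    have hinner : ⟪x - y, B d⟫ = I := by
      rw [hadj, LinearMap.adjoint_inner_right]
    have hBdnorm : ‖B d‖ ≤ M * ‖d‖ := by
      have : B d = (ContinuousLinearMap.adjoint (LinearMap.toContinuousLinearMap Ab)) d := by
        rw [hadj, LinearMap.adjoint_eq_toCLM_adjoint]; rfl
      rw [this, hM]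
      calc ‖(ContinuousLinearMap.adjoint (LinearMap.toContinuousLinearMap Ab)) d‖
          ≤ ‖ContinuousLinearMap.adjoint (LinearMap.toContinuousLinearMap Ab)‖ * ‖d‖ :=
            ContinuousLinearMap.le_opNorm _ _
        _ = ‖LinearMap.toContinuousLinearMap Ab‖ * ‖d‖ := by
            rw [ContinuousLinearMap.adjoint.norm_map]
    -- coordinatewise bound
    have hui : ∀ i, (Ab x + b) i - (Ab y + b) i = u i := by
      intro i
      rw [hu, map_sub Ab]
      simp [PiLp.add_apply, PiLp.sub_apply]
    have hdi : ∀ i, d i = σ ((Ab x + b) i) - σ ((Ab y + b) i) := by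
      intro i; rw [hd]; simp [hg, PiLp.sub_apply]
    have hpt : ∀ i, (d i) ^ 2 ≤ L * (u i * d i) := by
      intro i
      rw [hdi i, ← hui i]
      exact stmt13_aux σ L hmono hlip _ _
    have hIsum : I = ∑ i, u i * d i := by
      rw [hI]
      simp [PiLp.inner_apply, RCLike.inner_apply, conj_trivial]
      exact Finset.sum_congr rfl fun i _ => mul_comm _ _
    have hdd : ‖d‖ ^ 2 = ∑ i, (d i) ^ 2 := by
      rw [← real_inner_self_eq_norm_sq]
      simp only [PiLp.inner_apply, RCLike.inner_apply, conj_trivial, sq]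
    have hLI : ‖d‖ ^ 2 ≤ L * I := by
      rw [hdd, hIsum, Finset.mul_sum]
      exact Finset.sum_le_sum fun i _ => hpt i
    -- expansion
    have hexp : ‖(x - y) - c • B d‖ ^ 2
        = ‖x - y‖ ^ 2 - 2 * (c * I) + c ^ 2 * ‖B d‖ ^ 2 := by
      rw [norm_sub_sq_real, real_inner_smul_right, hinner, norm_smul]
      rw [Real.norm_eq_abs, mul_pow, sq_abs]
    have hsq : ‖(x - y) - c • B d‖ ^ 2 ≤ ‖x - y‖ ^ 2 := by
      rw [hexp]
      exact stmt13_aux2 L c M I ‖d‖ ‖B d‖ ‖x - y‖ hL hcpos h3 hLI hBdnorm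
        (norm_nonneg _) (norm_nonneg _)
    have := Real.sqrt_le_sqrt hsq
    rwa [Real.sqrt_sq (norm_nonneg _), Real.sqrt_sq (norm_nonneg _)] at this
  · intro x
    show x - h • B (g (Ab x + b)) = (1 - α) • x + α • (x - c • B (g (Ab x + b)))
    rw [← hcα]
    module
end

section
/- For Heun's method with 𝒜 = [[0,0],[1,0]] and b = (1/2, 1/2), the function K(ζ₁, ζ₂) = 1 + (1/2)ζ₁ + (1/2)ζ₂(1 + ζ₁) satisfies |K(ζ₁, ζ₂)| ≤ 1 for all ζ₁, ζ₂ ∈ ℂ with |ζ₁ + 1| ≤ 1 and |ζ₂ + 1| ≤ 1; i.e., Heun's method is 1-circle contractive. -/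
theorem stmt19 :
    ∀ ζ₁ ζ₂ : ℂ, ‖ζ₁ + 1‖ ≤ 1 → ‖ζ₂ + 1‖ ≤ 1 →
      ‖1 + ζ₁ / 2 + ζ₂ * (1 + ζ₁) / 2‖ ≤ 1 := by
  intro ζ₁ ζ₂ h₁ h₂
  have e : 1 + ζ₁ / 2 + ζ₂ * (1 + ζ₁) / 2 = (1 + (ζ₁ + 1) * (ζ₂ + 1)) / 2 := by ring
  rw [e]
  have h3 : ‖(ζ₁ + 1) * (ζ₂ + 1)‖ ≤ 1 := by
    rw [norm_mul]
    exact mul_le_one₀ h₁ (norm_nonneg _) h₂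
  calc ‖(1 + (ζ₁ + 1) * (ζ₂ + 1)) / 2‖
      ≤ (‖(1 : ℂ)‖ + ‖(ζ₁ + 1) * (ζ₂ + 1)‖) / ‖(2 : ℂ)‖ := by
        rw [norm_div]; gcongr; exact norm_add_le _ _
    _ ≤ (1 + 1) / 2 := by simp [norm_mul] at h3 ⊢; linarith
    _ = 1 := by norm_num
end
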